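/- arXiv:1109.0043 — 4 statements merged into one kernel-verified Lean document; each statement's English description precedes it below -/
import Mathlib

section
/- For any càdlàg functions f, g : [a,b] → ℝ and any c_1, c_2 ≥ 0, one has TV^{c_1+c_2}(f+g,[a,b]) ≤ TV^{c_1}(f,[a,b]) + TV^{c_2}(g,[a,b]), where the inequality is understood in [0,∞] (both sides may be infinite when c_1 = 0 or c_2 = 0). The analogous inequalities hold for the upward truncated variation UTV^c and the downward truncated variation DTV^c. -/
open MeasureTheory ProbabilityTheory Filter Set
open scoped ENNReal NNReal Topology

noncomputable section

/-- Truncated variation of `f` on `[a,b]` with threshold `c`: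
`sup` over finite nondecreasing sequences in `[a,b]` of `∑ max(|f(t_{i+1}) - f(t_i)| - c, 0)`. -/
def TV (f : ℝ → ℝ) (a b c : ℝ) : ℝ≥0∞ :=
  ⨆ (n : ℕ) (t : Fin (n + 1) → ℝ) (_ : Monotone t) (_ : ∀ i, t i ∈ Set.Icc a b),
    ∑ i : Fin n, ENNReal.ofReal (|f (t i.succ) - f (t i.castSucc)| - c)

/-- Upward truncated variation of `f` on `[a,b]` with threshold `c`:
`sup` over interleaved sequences `a ≤ t_1 ≤ s_1 ≤ t_2 ≤ … ≤ s_n ≤ b` of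
`∑ max(f(s_i) - f(t_i) - c, 0)`. -/
def UTV (f : ℝ → ℝ) (a b c : ℝ) : ℝ≥0∞ :=
  ⨆ (n : ℕ) (t : Fin n → ℝ) (s : Fin n → ℝ)
    (_ : ∀ i, a ≤ t i ∧ t i ≤ s i ∧ s i ≤ b)
    (_ : ∀ i j, i < j → s i ≤ t j),
    ∑ i : Fin n, ENNReal.ofReal (f (s i) - f (t i) - c)

/-- Downward truncated variation of `f` on `[a,b]` with threshold `c`. -/
def DTV (f : ℝ → ℝ) (a b c : ℝ) : ℝ≥0∞ := UTV (fun x => - f x) a b c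

/-- A standard one-dimensional Brownian motion started at `0`, under the measure `P`:
measurable in `ω`, continuous paths, `W 0 = 0`, Gaussian increments with variance `t - s`,
and independent increments. -/
structure IsBrownian {Ω : Type*} [MeasurableSpace Ω] (P : Measure Ω) (W : ℝ → Ω → ℝ) :
    Prop where
  meas : ∀ t, Measurable (W t)
  init : ∀ ω, W 0 ω = 0
  cont : ∀ ω, Continuous fun t => W t ω
  gauss : ∀ s t : ℝ, 0 ≤ s → s ≤ t →
    Measure.map (fun ω => W t ω - W s ω) P = gaussianReal 0 (Real.toNNReal (t - s))
  indep : ∀ (n : ℕ) (τ : Fin (n + 1) → ℝ), Monotone τ → (∀ i, 0 ≤ τ i) →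
    iIndepFun
      (fun (i : Fin n) ω => W (τ i.succ) ω - W (τ i.castSucc) ω) P

/-- A càdlàg function on `[a,b]`: right-continuous on `[a,b)` and with left limits on `(a,b]`. -/
def Cadlag (f : ℝ → ℝ) (a b : ℝ) : Prop :=
  (∀ x ∈ Set.Ico a b, ContinuousWithinAt f (Set.Ici x) x) ∧
  (∀ x ∈ Set.Ioc a b, ∃ L : ℝ, Tendsto f (𝓝[<] x) (𝓝 L))

lemma ofReal_sub_add_le (A B c₁ c₂ : ℝ) :
    ENNReal.ofReal (|A + B| - (c₁ + c₂)) ≤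
      ENNReal.ofReal (|A| - c₁) + ENNReal.ofReal (|B| - c₂) := by
  calc ENNReal.ofReal (|A + B| - (c₁ + c₂))
      ≤ ENNReal.ofReal ((|A| - c₁) + (|B| - c₂)) := by
        apply ENNReal.ofReal_le_ofReal
        have := abs_add_le A B
        linarith
    _ ≤ _ := ENNReal.ofReal_add_le

lemma ofReal_sub_add_le' (A B c₁ c₂ : ℝ) :
    ENNReal.ofReal (A + B - (c₁ + c₂)) ≤
      ENNReal.ofReal (A - c₁) + ENNReal.ofReal (B - c₂) := by
  calc ENNReal.ofReal (A + B - (c₁ + c₂))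
      ≤ ENNReal.ofReal ((A - c₁) + (B - c₂)) := by
        apply ENNReal.ofReal_le_ofReal; linarith
    _ ≤ _ := ENNReal.ofReal_add_le

lemma TV_add_le (f g : ℝ → ℝ) (a b c₁ c₂ : ℝ) :
    TV (fun x => f x + g x) a b (c₁ + c₂) ≤ TV f a b c₁ + TV g a b c₂ := by
  refine iSup_le fun n => iSup_le fun t => iSup_le fun hmono => iSup_le fun hmem => ?_
  calc ∑ i : Fin n, ENNReal.ofReal (|(f (t i.succ) + g (t i.succ)) -
          (f (t i.castSucc) + g (t i.castSucc))| - (c₁ + c₂))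
      ≤ ∑ i : Fin n, (ENNReal.ofReal (|f (t i.succ) - f (t i.castSucc)| - c₁)
          + ENNReal.ofReal (|g (t i.succ) - g (t i.castSucc)| - c₂)) := by
        refine Finset.sum_le_sum fun i _ => ?_
        have h := ofReal_sub_add_le (f (t i.succ) - f (t i.castSucc))
          (g (t i.succ) - g (t i.castSucc)) c₁ c₂
        have e : f (t i.succ) + g (t i.succ) - (f (t i.castSucc) + g (t i.castSucc))
            = (f (t i.succ) - f (t i.castSucc)) + (g (t i.succ) - g (t i.castSucc)) := by ring
        rw [e]; exact h
    _ = (∑ i : Fin n, ENNReal.ofReal (|f (t i.succ) - f (t i.castSucc)| - c₁))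
        + ∑ i : Fin n, ENNReal.ofReal (|g (t i.succ) - g (t i.castSucc)| - c₂) :=
        Finset.sum_add_distrib
    _ ≤ TV f a b c₁ + TV g a b c₂ := by
        gcongr
        · exact le_iSup_of_le n (le_iSup_of_le t (le_iSup_of_le hmono (le_iSup_of_le hmem le_rfl)))
        · exact le_iSup_of_le n (le_iSup_of_le t (le_iSup_of_le hmono (le_iSup_of_le hmem le_rfl)))

lemma UTV_add_le (f g : ℝ → ℝ) (a b c₁ c₂ : ℝ) :
    UTV (fun x => f x + g x) a b (c₁ + c₂) ≤ UTV f a b c₁ + UTV g a b c₂ := by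
  refine iSup_le fun n => iSup_le fun t => iSup_le fun s => iSup_le fun h1 =>
    iSup_le fun h2 => ?_
  calc ∑ i : Fin n, ENNReal.ofReal ((f (s i) + g (s i)) - (f (t i) + g (t i)) - (c₁ + c₂))
      ≤ ∑ i : Fin n, (ENNReal.ofReal (f (s i) - f (t i) - c₁)
          + ENNReal.ofReal (g (s i) - g (t i) - c₂)) := by
        refine Finset.sum_le_sum fun i _ => ?_
        have h := ofReal_sub_add_le' (f (s i) - f (t i)) (g (s i) - g (t i)) c₁ c₂
        have e : f (s i) + g (s i) - (f (t i) + g (t i)) - (c₁ + c₂)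
            = (f (s i) - f (t i)) + (g (s i) - g (t i)) - (c₁ + c₂) := by ring
        rw [e]; exact h
    _ = (∑ i : Fin n, ENNReal.ofReal (f (s i) - f (t i) - c₁))
        + ∑ i : Fin n, ENNReal.ofReal (g (s i) - g (t i) - c₂) := Finset.sum_add_distrib
    _ ≤ UTV f a b c₁ + UTV g a b c₂ := by
        gcongr
        · exact le_iSup_of_le n (le_iSup_of_le t (le_iSup_of_le s
            (le_iSup_of_le h1 (le_iSup_of_le h2 le_rfl))))
        · exact le_iSup_of_le n (le_iSup_of_le t (le_iSup_of_le s
            (le_iSup_of_le h1 (le_iSup_of_le h2 le_rfl))))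

/-- For càdlàg `f, g` on `[a,b]` and `c₁, c₂ ≥ 0`,
`TV^{c₁+c₂}(f+g) ≤ TV^{c₁}(f) + TV^{c₂}(g)` in `[0,∞]`, and analogously for `UTV` and `DTV`. -/
theorem truncated_variation_subadditive
    (a b : ℝ) (hab : a ≤ b) (f g : ℝ → ℝ)
    (hf : Cadlag f a b) (hg : Cadlag g a b)
    (c₁ c₂ : ℝ) (hc₁ : 0 ≤ c₁) (hc₂ : 0 ≤ c₂) :
    TV (fun x => f x + g x) a b (c₁ + c₂) ≤ TV f a b c₁ + TV g a b c₂ ∧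
    UTV (fun x => f x + g x) a b (c₁ + c₂) ≤ UTV f a b c₁ + UTV g a b c₂ ∧
    DTV (fun x => f x + g x) a b (c₁ + c₂) ≤ DTV f a b c₁ + DTV g a b c₂ := by
  refine ⟨TV_add_le f g a b c₁ c₂, UTV_add_le f g a b c₁ c₂, ?_⟩
  have : DTV (fun x => f x + g x) a b (c₁ + c₂)
      = UTV (fun x => (-f x) + (-g x)) a b (c₁ + c₂) := by
    unfold DTV
    congr 1
    funext x
    ring
  rw [this]
  exact UTV_add_le (fun x => -f x) (fun x => -g x) a b c₁ c₂
end
end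

section
/- For any càdlàg functions f, g : [a,b] → ℝ and any c ≥ 0, one has both TV^c(f+g,[a,b]) ≤ TV^c(f,[a,b]) + TV(g,[a,b]) and TV^c(f,[a,b]) ≤ TV^c(f+g,[a,b]) + TV(g,[a,b]) in [0,∞]; in particular, if g has finite total variation and c > 0, then |TV^c(f+g,[a,b]) − TV^c(f,[a,b])| ≤ TV(g,[a,b]). -/
open MeasureTheory ProbabilityTheory Filter Set
open scoped ENNReal NNReal Topology

noncomputable section

lemma TV_le_add_of_abs_le (F G H : ℝ → ℝ) (c : ℝ)
    (hFGH : ∀ x y : ℝ, |F y - F x| ≤ |G y - G x| + |H y - H x|) (a b : ℝ) :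
    TV F a b c ≤ TV G a b c + TV H a b 0 := by
  refine iSup_le fun n => iSup_le fun t => iSup_le fun hm => iSup_le fun hmem => ?_
  calc ∑ i : Fin n, ENNReal.ofReal (|F (t i.succ) - F (t i.castSucc)| - c)
      ≤ ∑ i : Fin n, (ENNReal.ofReal (|G (t i.succ) - G (t i.castSucc)| - c)
          + ENNReal.ofReal (|H (t i.succ) - H (t i.castSucc)| - 0)) := by
        refine Finset.sum_le_sum fun i _ => ?_
        calc ENNReal.ofReal (|F (t i.succ) - F (t i.castSucc)| - c)
            ≤ ENNReal.ofReal ((|G (t i.succ) - G (t i.castSucc)| - c)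
                + (|H (t i.succ) - H (t i.castSucc)| - 0)) := by
              refine ENNReal.ofReal_le_ofReal ?_
              have := hFGH (t i.castSucc) (t i.succ)
              linarith
          _ ≤ _ := ENNReal.ofReal_add_le
    _ = (∑ i : Fin n, ENNReal.ofReal (|G (t i.succ) - G (t i.castSucc)| - c))
        + ∑ i : Fin n, ENNReal.ofReal (|H (t i.succ) - H (t i.castSucc)| - 0) :=
        Finset.sum_add_distrib
    _ ≤ TV G a b c + TV H a b 0 := by
        refine add_le_add ?_ ?_
        · exact le_iSup_of_le n (le_iSup_of_le t (le_iSup_of_le hm (le_iSup_of_le hmem le_rfl)))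
        · exact le_iSup_of_le n (le_iSup_of_le t (le_iSup_of_le hm (le_iSup_of_le hmem le_rfl)))

/-- For càdlàg `f, g` on `[a,b]` and `c ≥ 0`:
`TV^c(f+g) ≤ TV^c(f) + TV(g)` and `TV^c(f) ≤ TV^c(f+g) + TV(g)` in `[0,∞]`; in particular,
if `g` has finite total variation and `c > 0`, then `|TV^c(f+g) − TV^c(f)| ≤ TV(g)`. -/
theorem truncated_variation_lipschitz_in_total_variation
    (a b : ℝ) (hab : a ≤ b) (f g : ℝ → ℝ)
    (hf : Cadlag f a b) (hg : Cadlag g a b)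
    (c : ℝ) (hc : 0 ≤ c) :
    TV (fun x => f x + g x) a b c ≤ TV f a b c + TV g a b 0 ∧
    TV f a b c ≤ TV (fun x => f x + g x) a b c + TV g a b 0 ∧
    (TV g a b 0 ≠ ∞ → 0 < c →
      |(TV (fun x => f x + g x) a b c).toReal - (TV f a b c).toReal|
        ≤ (TV g a b 0).toReal) := by
  have h1 : TV (fun x => f x + g x) a b c ≤ TV f a b c + TV g a b 0 := by
    refine TV_le_add_of_abs_le _ f g c (fun x y => ?_) a b
    have : (f y + g y) - (f x + g x) = (f y - f x) + (g y - g x) := by ring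
    rw [this]
    exact abs_add_le _ _
  have h2 : TV f a b c ≤ TV (fun x => f x + g x) a b c + TV g a b 0 := by
    refine TV_le_add_of_abs_le f _ g c (fun x y => ?_) a b
    have : f y - f x = ((f y + g y) - (f x + g x)) + (-(g y - g x)) := by ring
    calc |f y - f x| = |((f y + g y) - (f x + g x)) + (-(g y - g x))| := by rw [← this]
      _ ≤ |(f y + g y) - (f x + g x)| + |-(g y - g x)| := abs_add_le _ _
      _ = _ := by rw [abs_neg]
  refine ⟨h1, h2, fun hC hc' => ?_⟩
  set A := TV (fun x => f x + g x) a b c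
  set B := TV f a b c
  set C := TV g a b 0
  by_cases hB : B = ∞
  · have hA : A = ∞ := by
      by_contra hA
      rw [hB] at h2
      exact (ENNReal.add_lt_top.mpr ⟨lt_top_iff_ne_top.mpr hA, lt_top_iff_ne_top.mpr hC⟩).ne
        (top_le_iff.mp h2)
    simp [hA, hB, ENNReal.toReal_nonneg]
  · have hA : A ≠ ∞ := by
      intro hA
      rw [hA] at h1
      exact (ENNReal.add_lt_top.mpr ⟨lt_top_iff_ne_top.mpr hB, lt_top_iff_ne_top.mpr hC⟩).ne (top_le_iff.mp h1)
    have t1 : A.toReal ≤ B.toReal + C.toReal := by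
      rw [← ENNReal.toReal_add hB hC]
      exact ENNReal.toReal_mono (by simp [hB, hC, ENNReal.add_ne_top]) h1
    have t2 : B.toReal ≤ A.toReal + C.toReal := by
      rw [← ENNReal.toReal_add hA hC]
      exact ENNReal.toReal_mono (by simp [hA, hC, ENNReal.add_ne_top]) h2
    rw [abs_sub_le_iff]
    constructor <;> linarith
end
end

section
/- Let W be a standard one-dimensional Brownian motion with W_0 = 0, let μ : ℝ → ℝ be a measurable function with |μ(x)| ≤ μ* for all x, and let X be a continuous process satisfying, almost surely, X_t = X_0 + W_t + ∫_0^t μ(X_s) ds for all t ≥ 0. Then for every t ≥ 0, δ > 0 and b > 0, P( sup_{s∈[t, t+δ]} |X_s − X_t| ≥ (μ* + b) δ ) ≤ 2 exp(−b^2 δ / 2). -/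
open MeasureTheory ProbabilityTheory Filter Set
open scoped ENNReal NNReal Topology

noncomputable section

lemma my_meas_exp (l : ℝ) : Measurable fun x : ℝ => ENNReal.ofReal (Real.exp (l * x)) :=
  ENNReal.measurable_ofReal.comp (Real.measurable_exp.comp (measurable_id.const_mul l))

lemma my_lintegral_exp_gaussianReal (l : ℝ) (v : ℝ≥0) :
    ∫⁻ x, ENNReal.ofReal (Real.exp (l * x)) ∂(gaussianReal 0 v) =
      ENNReal.ofReal (Real.exp (l ^ 2 * v / 2)) := by
  by_cases hv : v = 0
  · subst hv; simp [gaussianReal_zero_var, lintegral_dirac]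
  · rw [gaussianReal_of_var_ne_zero _ hv,
      lintegral_withDensity_eq_lintegral_mul _ (measurable_gaussianPDF _ _) (my_meas_exp l)]
    have hpt : ∀ x : ℝ, (gaussianPDF 0 v * fun x => ENNReal.ofReal (Real.exp (l * x))) x
        = ENNReal.ofReal (Real.exp (l ^ 2 * v / 2)) *
          ENNReal.ofReal (gaussianPDFReal (l * v) v x) := by
      intro x
      have hv' : (0:ℝ) < (v:ℝ) := by positivity
      simp only [Pi.mul_apply, gaussianPDF_def]
      rw [← ENNReal.ofReal_mul (gaussianPDFReal_nonneg _ _ _),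
        ← ENNReal.ofReal_mul (Real.exp_nonneg _)]
      congr 1
      have key : Real.exp (-(x - 0)^2/(2*(v:ℝ))) * Real.exp (l*x)
          = Real.exp (l^2*(v:ℝ)/2) * Real.exp (-(x - l*(v:ℝ))^2/(2*(v:ℝ))) := by
        rw [← Real.exp_add, ← Real.exp_add]
        congr 1
        field_simp
        ring
      unfold gaussianPDFReal
      linear_combination (√(2 * Real.pi * (v:ℝ)))⁻¹ * key
    simp only [hpt]
    rw [lintegral_const_mul _ (measurable_gaussianPDFReal _ _).ennreal_ofReal,
      lintegral_gaussianPDFReal_eq_one _ hv, mul_one]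

lemma my_tele {Ω : Type*} (B : ℝ → Ω → ℝ) (τ : ℕ → ℝ) (n : ℕ) (ω : Ω) :
    ∀ j : ℕ, j ≤ n →
    (∑ i ∈ Finset.univ.filter (fun i : Fin n => (i : ℕ) < j),
        (B (τ ((i : ℕ) + 1)) ω - B (τ (i : ℕ)) ω))
      = B (τ j) ω - B (τ 0) ω := by
  intro j
  induction j with
  | zero => intro _; simp
  | succ m ih =>
    intro hj
    have hmn : m < n := hj
    have hstep : Finset.univ.filter (fun i : Fin n => (i : ℕ) < m + 1)
        = insert (⟨m, hmn⟩ : Fin n) (Finset.univ.filter (fun i : Fin n => (i : ℕ) < m)) := by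
      ext i
      simp only [Finset.mem_filter, Finset.mem_univ, true_and, Finset.mem_insert, Fin.ext_iff]
      omega
    rw [hstep, Finset.sum_insert (by simp), ih (le_of_lt hmn)]
    ring

lemma my_onesided {Ω : Type*} [MeasurableSpace Ω] (P : Measure Ω) [IsProbabilityMeasure P]
    (B : ℝ → Ω → ℝ)
    (hmeas : ∀ t, Measurable (B t))
    (hgauss : ∀ s t : ℝ, 0 ≤ s → s ≤ t →
      Measure.map (fun ω => B t ω - B s ω) P = gaussianReal 0 (Real.toNNReal (t - s)))
    (hindep : ∀ (n : ℕ) (τ : Fin (n + 1) → ℝ), Monotone τ → (∀ i, 0 ≤ τ i) →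
      iIndepFun
        (fun (i : Fin n) ω => B (τ i.succ) ω - B (τ i.castSucc) ω) P)
    (δ : ℝ) (hδ : 0 < δ) (c : ℝ) (hc : 0 < c)
    (n : ℕ) (τ : ℕ → ℝ) (hmono : Monotone τ) (hpos : ∀ k, 0 ≤ τ k)
    (hspan : τ n - τ 0 ≤ δ) :
    P {ω | ∃ k ≤ n, c ≤ B (τ k) ω - B (τ 0) ω}
      ≤ ENNReal.ofReal (Real.exp (-c ^ 2 / (2 * δ))) := by
  classical
  set l : ℝ := c / δ with hl
  have hl0 : 0 < l := div_pos hc hδ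
  -- mgf transfer
  have hBexp : ∀ s u : ℝ, 0 ≤ s → s ≤ u →
      ∫⁻ ω, ENNReal.ofReal (Real.exp (l * (B u ω - B s ω))) ∂P
        = ENNReal.ofReal (Real.exp (l ^ 2 * (u - s) / 2)) := by
    intro s u hs hsu
    have hm : Measurable fun ω => B u ω - B s ω := (hmeas u).sub (hmeas s)
    rw [← lintegral_map (my_meas_exp l) hm, hgauss s u hs hsu,
      my_lintegral_exp_gaussianReal, Real.coe_toNNReal _ (by linarith)]
  -- abbreviations (plain functions)
  have hgmeas : ∀ k : ℕ, Measurable (fun ω => B (τ k) ω - B (τ 0) ω) :=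
    fun k => (hmeas _).sub (hmeas _)
  have hincmeas : ∀ i : Fin n, Measurable (fun ω => B (τ ((i:ℕ)+1)) ω - B (τ (i:ℕ)) ω) :=
    fun i => (hmeas _).sub (hmeas _)
  have hii : iIndepFun
      (fun (i : Fin n) ω => B (τ ((i:ℕ)+1)) ω - B (τ (i:ℕ)) ω) P := by
    have h := hindep n (fun i : Fin (n+1) => τ i)
      (fun i j hij => hmono (by exact_mod_cast hij)) (fun i => hpos _)
    simpa [Fin.val_succ, Fin.coe_castSucc] using h
  -- the first-passage sets
  set A : ℕ → Set Ω := fun k =>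
    {ω | c ≤ B (τ k) ω - B (τ 0) ω ∧ ∀ j < k, B (τ j) ω - B (τ 0) ω < c} with hA
  have hAmeas : ∀ k, MeasurableSet (A k) := by
    intro k
    rw [hA]
    simp only [Set.setOf_and]
    apply (measurableSet_le measurable_const (hgmeas k)).inter
    have : {ω | ∀ j < k, B (τ j) ω - B (τ 0) ω < c}
        = ⋂ j ∈ Finset.range k, {ω | B (τ j) ω - B (τ 0) ω < c} := by
      ext ω; simp [Finset.mem_range]
    rw [this]
    exact MeasurableSet.biInter (Finset.range k).countable_toSet
      (fun j _ => measurableSet_lt (hgmeas j) measurable_const)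
  have hpd : ∀ i j : ℕ, i ≠ j → Disjoint (A i) (A j) := by
    have hlt : ∀ i j : ℕ, i < j → Disjoint (A i) (A j) := by
      intro i j hij
      rw [Set.disjoint_left]
      rintro ω ⟨hci, -⟩ ⟨-, hall⟩
      exact absurd hci (not_le.mpr (hall i hij))
    intro i j hij
    rcases hij.lt_or_gt with h | h
    · exact hlt i j h
    · exact (hlt j i h).symm
  have hsub : {ω | ∃ k ≤ n, c ≤ B (τ k) ω - B (τ 0) ω} ⊆ ⋃ k ∈ Finset.range (n+1), A k := by
    rintro ω ⟨k, hk, hck⟩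
    have hex : ∃ m, c ≤ B (τ m) ω - B (τ 0) ω := ⟨k, hck⟩
    have h1 : Nat.find hex ∈ Finset.range (n+1) := by
      rw [Finset.mem_range]
      have : Nat.find hex ≤ k := Nat.find_min' hex hck
      omega
    simp only [Set.mem_iUnion]
    exact ⟨Nat.find hex, h1, Nat.find_spec hex, fun j hj => not_le.mp (Nat.find_min hex hj)⟩
  -- key per-k inequality
  have key : ∀ k, k ≤ n → ENNReal.ofReal (Real.exp (l * c)) * P (A k)
      ≤ ∫⁻ ω, (A k).indicator (fun _ => (1:ℝ≥0∞)) ω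
          * ENNReal.ofReal (Real.exp (l * (B (τ n) ω - B (τ 0) ω))) ∂P := by
    intro k hk
    set Sk : Finset (Fin n) := Finset.univ.filter (fun i => (i : ℕ) < k) with hSk
    set Tk : Finset (Fin n) := Finset.univ.filter (fun i => ¬ (i : ℕ) < k) with hTk
    have hST : Disjoint Sk Tk := by
      rw [Finset.disjoint_left]
      intro i hi hi'
      rw [hSk, Finset.mem_filter] at hi
      rw [hTk, Finset.mem_filter] at hi'
      exact hi'.2 hi.2
    have hUV := hii.indepFun_finset Sk Tk hST hincmeas
    -- partial-sum functions on tuples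
    set σ : ℕ → ((i : Sk) → ℝ) → ℝ :=
      fun j x => ∑ i : Sk, if ((i : Fin n) : ℕ) < j then x i else 0 with hσ
    have hσmeas : ∀ j, Measurable (σ j) := by
      intro j
      apply Finset.measurable_sum
      intro i _
      by_cases hij : ((i : Fin n) : ℕ) < j
      · simp only [if_pos hij]
        exact measurable_pi_apply i
      · simp only [if_neg hij]
        exact measurable_const
    set C : Set ((i : Sk) → ℝ) := {x | c ≤ σ k x ∧ ∀ j < k, σ j x < c} with hC
    have hCmeas : MeasurableSet C := by
      rw [hC]
      simp only [Set.setOf_and]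
      apply (measurableSet_le measurable_const (hσmeas k)).inter
      have : {x | ∀ j < k, σ j x < c} = ⋂ j ∈ Finset.range k, {x | σ j x < c} := by
        ext x; simp [Finset.mem_range]
      rw [this]
      exact MeasurableSet.biInter (Finset.range k).countable_toSet
        (fun j _ => measurableSet_lt (hσmeas j) measurable_const)
    -- the tuple maps
    set U : Ω → ((i : Sk) → ℝ) :=
      fun ω (i : Sk) => B (τ (((i : Fin n) : ℕ)+1)) ω - B (τ ((i : Fin n) : ℕ)) ω with hU
    set V : Ω → ((i : Tk) → ℝ) :=
      fun ω (i : Tk) => B (τ (((i : Fin n) : ℕ)+1)) ω - B (τ ((i : Fin n) : ℕ)) ω with hV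
    have hUmeas : Measurable U := measurable_pi_lambda _ (fun i => hincmeas _)
    have hVmeas : Measurable V := measurable_pi_lambda _ (fun i => hincmeas _)
    -- identify partial sums
    have hσU : ∀ j, j ≤ k → ∀ ω, σ j (U ω) = B (τ j) ω - B (τ 0) ω := by
      intro j hj ω
      have h0 : σ j (U ω) = ∑ i : Sk, if ((i : Fin n) : ℕ) < j then U ω i else 0 := rfl
      rw [h0]
      have h1 : (∑ i : Sk, if ((i : Fin n) : ℕ) < j then U ω i else 0)
          = ∑ i ∈ Sk, (if (i : ℕ) < j then B (τ ((i:ℕ)+1)) ω - B (τ (i:ℕ)) ω else 0) := by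
        rw [← Finset.sum_coe_sort Sk
          (fun i : Fin n => if (i : ℕ) < j then B (τ ((i:ℕ)+1)) ω - B (τ (i:ℕ)) ω else 0)]
      rw [h1, hSk, Finset.sum_filter]
      rw [← my_tele B τ n ω j (hj.trans hk), Finset.sum_filter]
      apply Finset.sum_congr rfl
      intro i _
      by_cases hij : (i : ℕ) < j
      · simp [hij, lt_of_lt_of_le hij hj]
      · simp [hij]
    have hVsum : ∀ ω, (∑ i : Tk, V ω i)
        = (B (τ n) ω - B (τ 0) ω) - (B (τ k) ω - B (τ 0) ω) := by
      intro ω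
      have h1 : (∑ i : Tk, V ω i) = ∑ i ∈ Tk, (B (τ ((i:ℕ)+1)) ω - B (τ (i:ℕ)) ω) := by
        rw [← Finset.sum_coe_sort Tk (fun i : Fin n => B (τ ((i:ℕ)+1)) ω - B (τ (i:ℕ)) ω)]
      have h2 : (∑ i ∈ Sk, (B (τ ((i:ℕ)+1)) ω - B (τ (i:ℕ)) ω))
          + (∑ i ∈ Tk, (B (τ ((i:ℕ)+1)) ω - B (τ (i:ℕ)) ω))
          = ∑ i : Fin n, (B (τ ((i:ℕ)+1)) ω - B (τ (i:ℕ)) ω) := by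
        rw [hSk, hTk]
        exact Finset.sum_filter_add_sum_filter_not _ _ _
      have h3 : (∑ i ∈ Sk, (B (τ ((i:ℕ)+1)) ω - B (τ (i:ℕ)) ω)) = B (τ k) ω - B (τ 0) ω := by
        rw [hSk]; exact my_tele B τ n ω k hk
      have h4 : (∑ i : Fin n, (B (τ ((i:ℕ)+1)) ω - B (τ (i:ℕ)) ω)) = B (τ n) ω - B (τ 0) ω := by
        have h := my_tele B τ n ω n le_rfl
        rwa [Finset.filter_true_of_mem (fun i _ => i.isLt), ] at h
      rw [h1]; linarith
    -- composed functions
    set φ : ((i : Sk) → ℝ) → ℝ≥0∞ := fun x => C.indicator (fun _ => (1:ℝ≥0∞)) x with hφ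
    set ψ : ((i : Tk) → ℝ) → ℝ≥0∞ :=
      fun x => ENNReal.ofReal (Real.exp (l * ∑ i, x i)) with hψ
    have hφmeas : Measurable φ := measurable_const.indicator hCmeas
    have hψmeas : Measurable ψ := by
      apply Measurable.ennreal_ofReal
      apply Measurable.exp
      exact (Finset.measurable_sum Finset.univ (fun i _ => measurable_pi_apply i)).const_mul l
    have hIF : IndepFun (φ ∘ U) (ψ ∘ V) P := hUV.comp hφmeas hψmeas
    have hprod := lintegral_mul_eq_lintegral_mul_lintegral_of_indepFun
      (hφmeas.comp hUmeas) (hψmeas.comp hVmeas) hIF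
    have hφU : ∀ ω, (φ ∘ U) ω = (A k).indicator (fun _ => (1:ℝ≥0∞)) ω := by
      intro ω
      have hiff : U ω ∈ C ↔ ω ∈ A k := by
        rw [hC, hA]
        simp only [Set.mem_setOf_eq]
        constructor
        · rintro ⟨h1, h2⟩
          exact ⟨by rwa [hσU k le_rfl ω] at h1,
            fun j hj => by rw [← hσU j (le_of_lt hj) ω]; exact h2 j hj⟩
        · rintro ⟨h1, h2⟩
          exact ⟨by rwa [hσU k le_rfl ω], fun j hj => by rw [hσU j (le_of_lt hj) ω]; exact h2 j hj⟩
      simp only [Function.comp_apply, hφ, Set.indicator_apply, hiff]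
    have hψV : ∀ ω, (ψ ∘ V) ω
        = ENNReal.ofReal (Real.exp (l * (B (τ n) ω - B (τ k) ω))) := by
      intro ω
      simp only [Function.comp_apply, hψ]
      rw [hVsum ω]
      have hh : (B (τ n) ω - B (τ 0) ω) - (B (τ k) ω - B (τ 0) ω)
          = B (τ n) ω - B (τ k) ω := by ring
      rw [hh]
    have hint1 : ∫⁻ ω, (φ ∘ U) ω ∂P = P (A k) := by
      calc ∫⁻ ω, (φ ∘ U) ω ∂P
          = ∫⁻ ω, (A k).indicator (fun _ => (1:ℝ≥0∞)) ω ∂P := by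
            apply lintegral_congr; exact hφU
        _ = P (A k) := by rw [lintegral_indicator (hAmeas k)]; simp
    have hint2 : ∫⁻ ω, (ψ ∘ V) ω ∂P
        = ENNReal.ofReal (Real.exp (l ^ 2 * (τ n - τ k) / 2)) := by
      calc ∫⁻ ω, (ψ ∘ V) ω ∂P
          = ∫⁻ ω, ENNReal.ofReal (Real.exp (l * (B (τ n) ω - B (τ k) ω))) ∂P := by
            apply lintegral_congr; exact hψV
        _ = _ := hBexp (τ k) (τ n) (hpos k) (hmono hk)
    have hmul_meas : Measurable fun ω =>
        (A k).indicator (fun _ => (1:ℝ≥0∞)) ω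
          * ENNReal.ofReal (Real.exp (l * (B (τ n) ω - B (τ k) ω))) :=
      (measurable_const.indicator (hAmeas k)).mul
        ((((hmeas (τ n)).sub (hmeas (τ k))).const_mul l).exp.ennreal_ofReal)
    calc ENNReal.ofReal (Real.exp (l * c)) * P (A k)
        ≤ ENNReal.ofReal (Real.exp (l * c)) * P (A k)
            * ENNReal.ofReal (Real.exp (l ^ 2 * (τ n - τ k) / 2)) := by
          apply le_mul_of_one_le_right'
          rw [ENNReal.one_le_ofReal]
          apply Real.one_le_exp
          have h1 : τ k ≤ τ n := hmono hk
          have h2 : (0:ℝ) ≤ l ^ 2 := sq_nonneg l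
          nlinarith
      _ = ENNReal.ofReal (Real.exp (l * c)) * ∫⁻ ω, ((φ ∘ U) * (ψ ∘ V)) ω ∂P := by
          rw [hprod, hint1, hint2]; ring
      _ = ENNReal.ofReal (Real.exp (l * c)) * ∫⁻ ω, (A k).indicator (fun _ => (1:ℝ≥0∞)) ω
            * ENNReal.ofReal (Real.exp (l * (B (τ n) ω - B (τ k) ω))) ∂P := by
          congr 1
          apply lintegral_congr
          intro ω
          simp only [Pi.mul_apply]
          rw [hφU ω, hψV ω]
      _ = ∫⁻ ω, (A k).indicator (fun _ => (1:ℝ≥0∞)) ω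
            * (ENNReal.ofReal (Real.exp (l * c))
              * ENNReal.ofReal (Real.exp (l * (B (τ n) ω - B (τ k) ω)))) ∂P := by
          rw [← lintegral_const_mul _ hmul_meas]
          apply lintegral_congr
          intro ω
          ring
      _ ≤ ∫⁻ ω, (A k).indicator (fun _ => (1:ℝ≥0∞)) ω
            * ENNReal.ofReal (Real.exp (l * (B (τ n) ω - B (τ 0) ω))) ∂P := by
          apply lintegral_mono
          intro ω
          by_cases hω : ω ∈ A k
          · simp only [Set.indicator_of_mem hω, one_mul]
            rw [← ENNReal.ofReal_mul (Real.exp_nonneg _), ← Real.exp_add]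
            apply ENNReal.ofReal_le_ofReal
            apply Real.exp_le_exp.mpr
            have hck : c ≤ B (τ k) ω - B (τ 0) ω := hω.1
            nlinarith [hl0.le]
          · simp [Set.indicator_of_notMem hω]
  -- assemble
  have hmain : ENNReal.ofReal (Real.exp (l * c))
      * P {ω | ∃ k ≤ n, c ≤ B (τ k) ω - B (τ 0) ω}
      ≤ ENNReal.ofReal (Real.exp (l ^ 2 * δ / 2)) := by
    have hFmeas : Measurable fun ω => ENNReal.ofReal (Real.exp (l * (B (τ n) ω - B (τ 0) ω))) :=
      (((hmeas (τ n)).sub (hmeas (τ 0))).const_mul l).exp.ennreal_ofReal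
    calc ENNReal.ofReal (Real.exp (l * c)) * P {ω | ∃ k ≤ n, c ≤ B (τ k) ω - B (τ 0) ω}
        ≤ ENNReal.ofReal (Real.exp (l * c)) * P (⋃ k ∈ Finset.range (n+1), A k) :=
          mul_le_mul_right (measure_mono hsub) _
      _ = ∑ k ∈ Finset.range (n+1), ENNReal.ofReal (Real.exp (l * c)) * P (A k) := by
          rw [measure_biUnion_finset (fun i _ j _ hij => hpd i j hij) (fun k _ => hAmeas k),
            Finset.mul_sum]
      _ ≤ ∑ k ∈ Finset.range (n+1), ∫⁻ ω, (A k).indicator (fun _ => (1:ℝ≥0∞)) ω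
            * ENNReal.ofReal (Real.exp (l * (B (τ n) ω - B (τ 0) ω))) ∂P := by
          apply Finset.sum_le_sum
          intro k hkmem
          exact key k (Nat.lt_succ_iff.mp (Finset.mem_range.mp hkmem))
      _ = ∫⁻ ω, (∑ k ∈ Finset.range (n+1), (A k).indicator (fun _ => (1:ℝ≥0∞)) ω)
            * ENNReal.ofReal (Real.exp (l * (B (τ n) ω - B (τ 0) ω))) ∂P := by
          rw [← lintegral_finset_sum _ (f := fun k ω => (A k).indicator (fun _ => (1:ℝ≥0∞)) ω
              * ENNReal.ofReal (Real.exp (l * (B (τ n) ω - B (τ 0) ω)))) (fun k _ =>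
            (measurable_const.indicator (hAmeas k)).mul hFmeas)]
          apply lintegral_congr
          intro ω
          rw [Finset.sum_mul]
      _ ≤ ∫⁻ ω, ENNReal.ofReal (Real.exp (l * (B (τ n) ω - B (τ 0) ω))) ∂P := by
          apply lintegral_mono
          intro ω
          have hle1 : (∑ k ∈ Finset.range (n+1), (A k).indicator (fun _ => (1:ℝ≥0∞)) ω) ≤ 1 := by
            by_cases hex : ∃ k ∈ Finset.range (n+1), ω ∈ A k
            · obtain ⟨k0, hk0, hωk0⟩ := hex
              rw [Finset.sum_eq_single_of_mem k0 hk0 (fun k _ hkne => by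
                rw [Set.indicator_of_notMem]
                intro hωk
                exact Set.disjoint_left.mp (hpd k k0 hkne) hωk hωk0)]
              simp [Set.indicator_of_mem hωk0]
            · push_neg at hex
              rw [Finset.sum_eq_zero (fun k hkmem => by
                rw [Set.indicator_of_notMem (hex k hkmem)])]
              exact zero_le_one
          calc (∑ k ∈ Finset.range (n+1), (A k).indicator (fun _ => (1:ℝ≥0∞)) ω)
                * ENNReal.ofReal (Real.exp (l * (B (τ n) ω - B (τ 0) ω)))
              ≤ 1 * ENNReal.ofReal (Real.exp (l * (B (τ n) ω - B (τ 0) ω))) :=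
                mul_le_mul_left hle1 _
            _ = _ := one_mul _
      _ = ENNReal.ofReal (Real.exp (l ^ 2 * (τ n - τ 0) / 2)) :=
          hBexp (τ 0) (τ n) (hpos 0) (hmono (Nat.zero_le n))
      _ ≤ ENNReal.ofReal (Real.exp (l ^ 2 * δ / 2)) := by
          apply ENNReal.ofReal_le_ofReal
          apply Real.exp_le_exp.mpr
          nlinarith [sq_nonneg l]
  have hrw : ENNReal.ofReal (Real.exp (l ^ 2 * δ / 2))
      = ENNReal.ofReal (Real.exp (l * c)) * ENNReal.ofReal (Real.exp (-c ^ 2 / (2 * δ))) := by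
    rw [← ENNReal.ofReal_mul (Real.exp_nonneg _), ← Real.exp_add]
    congr 1
    rw [hl]
    field_simp
    ring
  rw [hrw] at hmain
  exact (ENNReal.mul_le_mul_iff_right (by positivity) ENNReal.ofReal_ne_top).mp hmain


/-- For `X_t = X_0 + W_t + ∫_0^t μ(X_s) ds` with `|μ| ≤ μ*`, for all
`t ≥ 0`, `δ > 0`, `b > 0`:
`P(sup_{s ∈ [t,t+δ]} |X_s − X_t| ≥ (μ* + b)δ) ≤ 2 exp(−b²δ/2)`. -/
theorem crude_increment_estimate_drift_diffusion
    {Ω : Type*} [MeasurableSpace Ω] (P : Measure Ω) [IsProbabilityMeasure P]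
    (W : ℝ → Ω → ℝ) (hW : IsBrownian P W)
    (μdrift : ℝ → ℝ) (hμmeas : Measurable μdrift)
    (μstar : ℝ) (hbound : ∀ x, |μdrift x| ≤ μstar)
    (X : ℝ → Ω → ℝ) (hXcont : ∀ ω, Continuous fun t => X t ω)
    (hSDE : ∀ᵐ ω ∂P, ∀ t : ℝ, 0 ≤ t →
      X t ω = X 0 ω + W t ω + ∫ s in (0:ℝ)..t, μdrift (X s ω))
    (t δ b : ℝ) (ht : 0 ≤ t) (hδ : 0 < δ) (hb : 0 < b) :
    P {ω | (μstar + b) * δ ≤ ⨆ s : Set.Icc t (t + δ), |X s ω - X t ω|}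
      ≤ ENNReal.ofReal (2 * Real.exp (-b ^ 2 * δ / 2)) := by
  classical
  have hμ0 : 0 ≤ μstar := (abs_nonneg _).trans (hbound 0)
  set c : ℝ := b * δ with hcdef
  have hc : 0 < c := mul_pos hb hδ
  -- hypotheses for the reflected process
  have hneggauss : ∀ s u : ℝ, 0 ≤ s → s ≤ u →
      Measure.map (fun ω => (fun r ω' => -W r ω') u ω - (fun r ω' => -W r ω') s ω) P
        = gaussianReal 0 (Real.toNNReal (u - s)) := by
    intro s u hs hsu
    have h1 : (fun ω => -W u ω - -W s ω)
        = (fun x : ℝ => (-1 : ℝ) * x) ∘ (fun ω => W u ω - W s ω) := by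
      funext ω; simp [Function.comp]; ring
    show Measure.map (fun ω => -W u ω - -W s ω) P = _
    rw [h1, ← Measure.map_map (f := fun ω => W u ω - W s ω) ((by fun_prop : Measurable fun x : ℝ => (-1:ℝ) * x)) ((hW.meas u).sub (hW.meas s)),
      hW.gauss s u hs hsu, gaussianReal_map_const_mul]
    have h2 : (⟨(-1:ℝ)^2, sq_nonneg _⟩ : ℝ≥0) = 1 := by ext; norm_num
    congr 1
    · ring
    · ext; simp
  have hnegindep : ∀ (n : ℕ) (τ : Fin (n + 1) → ℝ), Monotone τ → (∀ i, 0 ≤ τ i) →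
      iIndepFun
        (fun (i : Fin n) ω => (fun r ω' => -W r ω') (τ i.succ) ω
          - (fun r ω' => -W r ω') (τ i.castSucc) ω) P := by
    intro n τ hm hp
    have h := (hW.indep n τ hm hp).comp (g := fun _ : Fin n => fun x : ℝ => (-1:ℝ) * x)
      (fun _ => (by fun_prop : Measurable fun x : ℝ => (-1:ℝ) * x))
    have h2 : (fun (i : Fin n) => (fun x : ℝ => (-1:ℝ) * x)
          ∘ (fun ω => W (τ i.succ) ω - W (τ i.castSucc) ω))
        = fun (i : Fin n) ω => (fun r ω' => -W r ω') (τ i.succ) ω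
          - (fun r ω' => -W r ω') (τ i.castSucc) ω := by
      funext i ω; simp [Function.comp]; ring
    rwa [h2] at h
  -- dyadic time grids
  set τd : ℕ → ℕ → ℝ := fun N k => t + δ * min (k : ℝ) ((2:ℝ)^N) / (2:ℝ)^N with hτd
  have hτd0 : ∀ N, τd N 0 = t := by
    intro N
    have : min ((0:ℕ):ℝ) ((2:ℝ)^N) = 0 := by
      rw [Nat.cast_zero]; exact min_eq_left (by positivity)
    simp [hτd, this]
  have hτdval : ∀ N k, k ≤ 2^N → τd N k = t + δ * k / 2^N := by
    intro N k hk
    have : min ((k:ℕ):ℝ) ((2:ℝ)^N) = (k:ℝ) := by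
      apply min_eq_left
      calc ((k:ℕ):ℝ) ≤ ((2^N : ℕ):ℝ) := by exact_mod_cast hk
        _ = (2:ℝ)^N := by push_cast; ring
    simp [hτd, this]
  have hτdmono : ∀ N, Monotone (τd N) := by
    intro N a a' haa'
    simp only [hτd]
    have h2N : (0:ℝ) < (2:ℝ)^N := by positivity
    gcongr
  have hτdpos : ∀ N k, 0 ≤ τd N k := by
    intro N k
    simp only [hτd]
    have h2N : (0:ℝ) < (2:ℝ)^N := by positivity
    have : (0:ℝ) ≤ min ((k:ℕ):ℝ) ((2:ℝ)^N) := le_min (Nat.cast_nonneg k) h2N.le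
    positivity
  have hτdspan : ∀ N, τd N (2^N) - τd N 0 ≤ δ := by
    intro N
    rw [hτd0, hτdval N (2^N) le_rfl]
    have h2N : (0:ℝ) < (2:ℝ)^N := by positivity
    have : ((2^N : ℕ):ℝ) = (2:ℝ)^N := by push_cast; ring
    rw [this]
    field_simp
    linarith
  -- the dyadic events
  set A : ℕ → ℝ → Set Ω := fun N c' =>
    {ω | ∃ k ≤ 2^N, c' ≤ |W (τd N k) ω - W (τd N 0) ω|} with hAdef
  -- per-level bound
  have hAbound : ∀ (N : ℕ) (c' : ℝ), 0 < c' →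
      P (A N c') ≤ ENNReal.ofReal (2 * Real.exp (-c'^2 / (2*δ))) := by
    intro N c' hc'
    have hup := my_onesided P W hW.meas hW.gauss hW.indep δ hδ c' hc' (2^N) (τd N)
      (hτdmono N) (hτdpos N) (hτdspan N)
    have hdown := my_onesided P (fun r ω' => -W r ω') (fun r => (hW.meas r).neg)
      hneggauss hnegindep δ hδ c' hc' (2^N) (τd N) (hτdmono N) (hτdpos N) (hτdspan N)
    have hsplit : A N c' ⊆ {ω | ∃ k ≤ 2^N, c' ≤ W (τd N k) ω - W (τd N 0) ω}
        ∪ {ω | ∃ k ≤ 2^N, c' ≤ (fun r ω' => -W r ω') (τd N k) ω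
            - (fun r ω' => -W r ω') (τd N 0) ω} := by
      rintro ω ⟨k, hk, habs⟩
      rcases le_abs.mp habs with h | h
      · exact Or.inl ⟨k, hk, h⟩
      · refine Or.inr ⟨k, hk, ?_⟩
        simpa using by linarith [h]
    calc P (A N c') ≤ P ({ω | ∃ k ≤ 2^N, c' ≤ W (τd N k) ω - W (τd N 0) ω}
        ∪ {ω | ∃ k ≤ 2^N, c' ≤ (fun r ω' => -W r ω') (τd N k) ω
            - (fun r ω' => -W r ω') (τd N 0) ω}) := measure_mono hsplit
      _ ≤ _ + _ := measure_union_le _ _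
      _ ≤ ENNReal.ofReal (Real.exp (-c'^2 / (2*δ))) + ENNReal.ofReal (Real.exp (-c'^2 / (2*δ))) :=
          add_le_add hup hdown
      _ = ENNReal.ofReal (2 * Real.exp (-c'^2 / (2*δ))) := by
          rw [← ENNReal.ofReal_add (Real.exp_nonneg _) (Real.exp_nonneg _)]
          congr 1
          ring
  -- monotonicity of dyadic events in N
  have hAmono : ∀ c', Monotone (fun N => A N c') := by
    intro c'
    apply monotone_nat_of_le_succ
    rintro N ω ⟨k, hk, hval⟩
    refine ⟨2*k, by omega, ?_⟩
    have he0 : τd (N+1) 0 = t := hτd0 _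
    have heq : τd (N+1) (2*k) = τd N k := by
      rw [hτdval N k hk, hτdval (N+1) (2*k) (by omega)]
      have h2N : (0:ℝ) < (2:ℝ)^N := by positivity
      push_cast
      field_simp
      ring
    rw [he0, heq, ← hτd0 N]
    exact hval
  -- the continuous event reduces to dyadic events
  have hdense : ∀ c' : ℝ, 0 < c' → c' < c →
      {ω | ∃ s₀ ∈ Icc t (t+δ), c ≤ |W s₀ ω - W t ω|} ⊆ ⋃ N : ℕ, A N c' := by
    intro c' hc'pos hc'lt
    rintro ω ⟨s₀, hs₀, hws₀⟩
    have hgcont : Continuous fun s => |W s ω - W t ω| := ((hW.cont ω).sub continuous_const).abs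
    have hopen : IsOpen {s : ℝ | c' < |W s ω - W t ω|} := isOpen_lt continuous_const hgcont
    have hmem : s₀ ∈ {s : ℝ | c' < |W s ω - W t ω|} := lt_of_lt_of_le hc'lt hws₀
    obtain ⟨ε, hε, hball⟩ := Metric.isOpen_iff.mp hopen s₀ hmem
    obtain ⟨N, hN⟩ := pow_unbounded_of_one_lt (δ / ε) (one_lt_two (α := ℝ))
    have h2N : (0:ℝ) < (2:ℝ)^N := by positivity
    have hδ2N : δ / 2^N < ε := by
      rw [div_lt_iff₀ h2N]
      rw [div_lt_iff₀ hε] at hN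
      nlinarith
    set x : ℝ := (s₀ - t) * 2^N / δ with hx
    have hx0 : 0 ≤ x := by
      apply div_nonneg _ hδ.le
      have := hs₀.1
      nlinarith
    have hxle : x ≤ (2:ℝ)^N := by
      rw [hx, div_le_iff₀ hδ]
      have := hs₀.2
      nlinarith
    set k : ℕ := ⌊x⌋₊ with hkdef
    have hkx : (k:ℝ) ≤ x := Nat.floor_le hx0
    have hxk1 : x < k + 1 := Nat.lt_floor_add_one x
    have hk2 : k ≤ 2^N := by
      have : (k:ℝ) ≤ ((2^N : ℕ):ℝ) := by
        push_cast
        linarith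
      exact_mod_cast this
    have hs₀eq : s₀ = t + x * δ / 2^N := by
      rw [hx]; field_simp; ring
    have hdist : dist (τd N k) s₀ < ε := by
      rw [Real.dist_eq, hτdval N k hk2, hs₀eq]
      have h1 : t + δ * k / 2^N - (t + x * δ / 2^N) = δ * ((k:ℝ) - x) / 2^N := by ring
      rw [h1, abs_div, abs_of_pos h2N, div_lt_iff₀ h2N]
      have h2 : |δ * ((k:ℝ) - x)| ≤ δ * 1 := by
        rw [abs_mul, abs_of_pos hδ]
        apply mul_le_mul_of_nonneg_left _ hδ.le
        rw [abs_le]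
        constructor <;> linarith
      have h3 : δ / 2^N < ε := hδ2N
      have h4 : δ < ε * 2^N := (div_lt_iff₀ h2N).mp h3
      nlinarith
    have hin := hball hdist
    refine Set.mem_iUnion.mpr ⟨N, k, hk2, ?_⟩
    rw [hτd0 N]
    exact le_of_lt hin
  -- Step A: from X to W
  set Bad : Set Ω := {ω | ¬ ∀ u : ℝ, 0 ≤ u →
    X u ω = X 0 ω + W u ω + ∫ s in (0:ℝ)..u, μdrift (X s ω)} with hBad
  have hBad0 : P Bad = 0 := by
    rw [hBad]
    exact hSDE
  have hstepA : {ω | (μstar + b) * δ ≤ ⨆ s : Set.Icc t (t + δ), |X s ω - X t ω|}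
      ⊆ {ω | ∃ s₀ ∈ Icc t (t+δ), c ≤ |W s₀ ω - W t ω|} ∪ Bad := by
    intro ω hω
    by_cases hsde : ∀ u : ℝ, 0 ≤ u →
        X u ω = X 0 ω + W u ω + ∫ s in (0:ℝ)..u, μdrift (X s ω)
    · left
      have hmint : Measurable fun u => μdrift (X u ω) := hμmeas.comp (hXcont ω).measurable
      have hint : ∀ a a' : ℝ, IntervalIntegrable (fun u => μdrift (X u ω)) volume a a' := by
        intro a a'
        rw [intervalIntegrable_iff]
        apply Measure.integrableOn_of_bounded (M := μstar) measure_Ioc_lt_top.ne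
          hmint.aestronglyMeasurable
        exact Eventually.of_forall fun u => by simpa using hbound (X u ω)
      have hIcc : ∀ s ∈ Icc t (t+δ), |X s ω - X t ω| ≤ |W s ω - W t ω| + μstar * δ := by
        intro s hs
        have h0s : (0:ℝ) ≤ s := le_trans ht hs.1
        have hdiff : X s ω - X t ω = (W s ω - W t ω) + ∫ u in t..s, μdrift (X u ω) := by
          rw [hsde s h0s, hsde t ht,
            ← intervalIntegral.integral_interval_sub_left (hint 0 s) (hint 0 t)]
          ring
        have hibd : |∫ u in t..s, μdrift (X u ω)| ≤ μstar * |s - t| := by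
          rw [← Real.norm_eq_abs]
          apply intervalIntegral.norm_integral_le_of_norm_le_const
          intro u _
          rw [Real.norm_eq_abs]
          exact hbound _
        calc |X s ω - X t ω| ≤ |W s ω - W t ω| + |∫ u in t..s, μdrift (X u ω)| := by
              rw [hdiff]; exact abs_add_le _ _
          _ ≤ |W s ω - W t ω| + μstar * δ := by
              have h1 : |s - t| ≤ δ := by
                rw [abs_le]; constructor <;> [linarith [hs.1]; linarith [hs.2]]
              have := hibd.trans (mul_le_mul_of_nonneg_left h1 hμ0)
              linarith
      haveI : Nonempty (Set.Icc t (t+δ)) :=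
        Set.Nonempty.to_subtype (Set.nonempty_Icc.mpr (by linarith))
      have hcont : Continuous fun s => |W s ω - W t ω| := ((hW.cont ω).sub continuous_const).abs
      have hbdd : BddAbove (Set.range fun s : Set.Icc t (t+δ) => |W s ω - W t ω|) := by
        have h5 : BddAbove ((fun s => |W s ω - W t ω|) '' Set.Icc t (t+δ)) :=
          (isCompact_Icc.image_of_continuousOn hcont.continuousOn).bddAbove
        rwa [Set.image_eq_range] at h5
      have hsup2 : (⨆ s : Set.Icc t (t+δ), |X s ω - X t ω|)
          ≤ (⨆ s : Set.Icc t (t+δ), |W s ω - W t ω|) + μstar * δ :=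
        ciSup_le fun s => (hIcc s s.2).trans (add_le_add_left (le_ciSup hbdd s) _)
      have hWc : c ≤ ⨆ s : Set.Icc t (t+δ), |W s ω - W t ω| := by
        have hω' : (μstar + b) * δ ≤ ⨆ s : Set.Icc t (t + δ), |X s ω - X t ω| := hω
        have : (μstar + b) * δ = μstar * δ + c := by rw [hcdef]; ring
        linarith
      obtain ⟨s₀, hs₀mem, hmax⟩ := (isCompact_Icc (a := t) (b := t+δ)).exists_isMaxOn
        (Set.nonempty_Icc.mpr (by linarith)) hcont.continuousOn
      have hle : (⨆ s : Set.Icc t (t+δ), |W s ω - W t ω|) ≤ |W s₀ ω - W t ω| :=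
        ciSup_le fun s => isMaxOn_iff.mp hmax _ s.2
      exact ⟨s₀, hs₀mem, le_trans hWc hle⟩
    · right
      exact hsde
  -- putting it all together for fixed m
  have hfix : ∀ m : ℕ, (1:ℝ)/(m+1) < c →
      P {ω | (μstar + b) * δ ≤ ⨆ s : Set.Icc t (t + δ), |X s ω - X t ω|}
        ≤ ENNReal.ofReal (2 * Real.exp (-(c - 1/(m+1))^2 / (2*δ))) := by
    intro m hm
    have hc' : 0 < c - 1/(m+1) := by linarith
    have hc'lt : c - 1/(m+1) < c := by
      have : (0:ℝ) < 1/(m+1) := by positivity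
      linarith
    calc P {ω | (μstar + b) * δ ≤ ⨆ s : Set.Icc t (t + δ), |X s ω - X t ω|}
        ≤ P ({ω | ∃ s₀ ∈ Icc t (t+δ), c ≤ |W s₀ ω - W t ω|} ∪ Bad) := measure_mono hstepA
      _ ≤ P {ω | ∃ s₀ ∈ Icc t (t+δ), c ≤ |W s₀ ω - W t ω|} + P Bad := measure_union_le _ _
      _ = P {ω | ∃ s₀ ∈ Icc t (t+δ), c ≤ |W s₀ ω - W t ω|} := by rw [hBad0, add_zero]
      _ ≤ P (⋃ N : ℕ, A N (c - 1/(m+1))) := measure_mono (hdense _ hc' hc'lt)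
      _ = ⨆ N, P (A N (c - 1/(m+1))) :=
          Directed.measure_iUnion ((hAmono (c - 1/(m+1))).directed_le)
      _ ≤ ENNReal.ofReal (2 * Real.exp (-(c - 1/(m+1))^2 / (2*δ))) :=
          iSup_le fun N => hAbound N _ hc'
  -- take the limit m → ∞
  have hlim : Tendsto (fun m : ℕ => ENNReal.ofReal (2 * Real.exp (-(c - 1/(m+1))^2 / (2*δ))))
      atTop (𝓝 (ENNReal.ofReal (2 * Real.exp (-c^2 / (2*δ))))) := by
    apply (ENNReal.continuous_ofReal.tendsto _).comp
    have h1 : Tendsto (fun m : ℕ => c - 1/(m+1)) atTop (𝓝 c) := by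
      have := tendsto_one_div_add_atTop_nhds_zero_nat (𝕜 := ℝ)
      have h2 : Tendsto (fun m : ℕ => c - 1/(m+1)) atTop (𝓝 (c - 0)) :=
        (tendsto_const_nhds (x := c) (f := (atTop : Filter ℕ))).sub this
      simpa using h2
    have h3 : Continuous fun y : ℝ => 2 * Real.exp (-y^2 / (2*δ)) :=
      continuous_const.mul (Real.continuous_exp.comp ((continuous_pow 2).neg.div_const (2*δ)))
    exact (h3.tendsto c).comp h1
  have hev : ∀ᶠ m : ℕ in atTop,
      P {ω | (μstar + b) * δ ≤ ⨆ s : Set.Icc t (t + δ), |X s ω - X t ω|}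
        ≤ ENNReal.ofReal (2 * Real.exp (-(c - 1/(m+1))^2 / (2*δ))) := by
    have h4 : Tendsto (fun m : ℕ => (1:ℝ)/(m+1)) atTop (𝓝 0) :=
      tendsto_one_div_add_atTop_nhds_zero_nat
    filter_upwards [h4.eventually_lt_const hc] with m hm
    exact hfix m hm
  have hfinal := ge_of_tendsto hlim hev
  have hexp : -c^2 / (2*δ) = -b^2 * δ / 2 := by
    rw [hcdef]
    field_simp
  rwa [hexp] at hfinal
end
end

section
/- Let T > 0, c > 0, n a positive integer, and let f : [0,T] → ℝ be càdlàg. Set t_i^n := iT/n for i = 0,1,…,n, and for t ∈ [0,T] let k(t) be the largest index i with t_i^n ≤ t; define ATV^{n,c}(t) := Σ_{i=0}^{k(t)−1} TV^c(f,[t_i^n, t_{i+1}^n]) + TV^c(f,[t_{k(t)}^n, t]). Then for every t ∈ [0,T], ATV^{n,c}(t) ≤ TV^c(f,[0,t]) ≤ ATV^{n,c}(t) + nc; in particular, for fixed n, sup_{t∈[0,T]} |TV^c(f,[0,t]) − ATV^{n,c}(t)| → 0 as c ↘ 0. -/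
open MeasureTheory ProbabilityTheory Filter Set
open scoped ENNReal NNReal Topology

noncomputable section

/-- The approximated truncated variation: with `t_i = iT/n` and `k(t) = ⌊nt/T⌋` the largest
index with `t_i ≤ t`, `ATV^{n,c}(t) = ∑_{i<k(t)} TV^c(f,[t_i,t_{i+1}]) + TV^c(f,[t_{k(t)},t])`. -/
def ATV (f : ℝ → ℝ) (T : ℝ) (n : ℕ) (c t : ℝ) : ℝ≥0∞ :=
  (∑ i ∈ Finset.range (Nat.floor (n * t / T)),
    TV f (i * T / n) ((i + 1) * T / n) c)
  + TV f ((Nat.floor (n * t / T) : ℝ) * T / n) t c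

-- Auxiliary lemmas
lemma sum_le_TV (f : ℝ → ℝ) (a b c : ℝ) (n : ℕ) (t : Fin (n+1) → ℝ)
    (h1 : Monotone t) (h2 : ∀ i, t i ∈ Set.Icc a b) :
    ∑ i : Fin n, ENNReal.ofReal (|f (t i.succ) - f (t i.castSucc)| - c) ≤ TV f a b c := by
  rw [TV]
  exact le_iSup_of_le n <| le_iSup_of_le t <| le_iSup_of_le h1 <| le_iSup_of_le h2 le_rfl

abbrev PartOf (a b : ℝ) : Type :=
  Σ n : ℕ, {t : Fin (n+1) → ℝ // Monotone t ∧ ∀ i, t i ∈ Set.Icc a b}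

def pSum (f : ℝ → ℝ) (c : ℝ) {a b : ℝ} (p : PartOf a b) : ℝ≥0∞ :=
  ∑ i : Fin p.1, ENNReal.ofReal (|f (p.2.1 i.succ) - f (p.2.1 i.castSucc)| - c)

lemma TV_eq_iSup (f : ℝ → ℝ) (a b c : ℝ) :
    TV f a b c = ⨆ p : PartOf a b, pSum f c p := by
  rw [TV, iSup_sigma]
  refine iSup_congr fun n => ?_
  rw [iSup_subtype]
  refine iSup_congr fun t => ?_
  rw [iSup_and]
  rfl

theorem PartOf.nonempty {a b : ℝ} (hab : a ≤ b) : Nonempty (PartOf a b) :=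
  ⟨⟨0, fun _ => a, monotone_const, fun _ => ⟨le_refl a, hab⟩⟩⟩

lemma TV_superadd (f : ℝ → ℝ) {a m b : ℝ} (c : ℝ) (ham : a ≤ m) (hmb : m ≤ b) :
    TV f a m c + TV f m b c ≤ TV f a b c := by
  haveI := PartOf.nonempty ham
  haveI := PartOf.nonempty hmb
  rw [TV_eq_iSup f a m c, TV_eq_iSup f m b c]
  refine ENNReal.iSup_add_iSup_le fun p q => ?_
  obtain ⟨n, t, ht1, ht2⟩ := p
  obtain ⟨p', s, hs1, hs2⟩ := q
  -- combined partition
  set v : ℕ → ℝ := fun j => if h : j ≤ n then t ⟨j, by omega⟩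
    else s ⟨min (j - (n+1)) p', by omega⟩ with hv
  have hvt : ∀ j (h : j ≤ n), v j = t ⟨j, by omega⟩ := by
    intro j h; simp [hv, h]
  have hvs : ∀ j (h1 : n + 1 ≤ j) (h2 : j ≤ n + 1 + p'), v j = s ⟨j - (n+1), by omega⟩ := by
    intro j h1 h2
    have h3 : ¬ j ≤ n := by omega
    have h4 : min (j - (n+1)) p' = j - (n+1) := by omega
    simp [hv, h3, h4]
  set u : Fin (n + 1 + p' + 1) → ℝ := fun j => v j with hu
  have humem : ∀ i, u i ∈ Set.Icc a b := by
    intro i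
    by_cases h : (i : ℕ) ≤ n
    · rw [hu]; simp only; rw [hvt _ h]
      exact ⟨(ht2 _).1, (ht2 _).2.trans hmb⟩
    · rw [hu]; simp only; rw [hvs _ (by omega) (by omega)]
      exact ⟨ham.trans (hs2 _).1, (hs2 _).2⟩
  have humono : Monotone u := by
    intro i j hij
    have hij' : (i : ℕ) ≤ (j : ℕ) := hij
    rw [hu]; simp only
    by_cases hi : (i : ℕ) ≤ n
    · by_cases hj : (j : ℕ) ≤ n
      · rw [hvt _ hi, hvt _ hj]
        exact ht1 (by simpa using hij')
      · rw [hvt _ hi, hvs _ (by omega) (by omega)]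
        exact ((ht2 _).2).trans (hs2 _).1
    · have hj : ¬ (j : ℕ) ≤ n := by omega
      rw [hvs _ (by omega) (by omega), hvs _ (by omega) (by omega)]
      refine hs1 ?_
      rw [Fin.le_def]
      simp only
      omega
  have key := sum_le_TV f a b c (n + 1 + p') u humono humem
  refine le_trans ?_ key
  -- now the sum splitting
  set g : Fin (n + 1 + p') → ℝ≥0∞ :=
    fun i => ENNReal.ofReal (|f (u i.succ) - f (u i.castSucc)| - c) with hg
  set E1 : Fin n ↪ Fin (n + 1 + p') :=
    ⟨Fin.castLE (by omega), Fin.castLE_injective _⟩ with hE1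
  set E2 : Fin p' ↪ Fin (n + 1 + p') :=
    ⟨fun i => ⟨n + 1 + i, Nat.add_lt_add_left i.isLt (n+1)⟩,
     fun i j h => Fin.ext (by
      have := congrArg Fin.val h
      simp only at this
      omega)⟩ with hE2
  have e1 : ∀ i : Fin n,
      ENNReal.ofReal (|f (t i.succ) - f (t i.castSucc)| - c) = g (E1 i) := by
    intro i
    have b1 : u ((E1 i).succ) = t i.succ := by
      have hq : u ((E1 i).succ) = v ((i:ℕ)+1) := rfl
      rw [hq, hvt ((i:ℕ)+1) (Nat.succ_le_of_lt i.isLt)]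
      congr 1
    have b2 : u ((E1 i).castSucc) = t i.castSucc := by
      have hq : u ((E1 i).castSucc) = v (i:ℕ) := rfl
      rw [hq, hvt (i:ℕ) i.isLt.le]
      congr 1
    rw [hg]; simp only [b1, b2]
  have e2 : ∀ i : Fin p',
      ENNReal.ofReal (|f (s i.succ) - f (s i.castSucc)| - c) = g (E2 i) := by
    intro i
    have b1 : u ((E2 i).succ) = s i.succ := by
      have hq : u ((E2 i).succ) = v (n + 1 + (i:ℕ) + 1) := rfl
      rw [hq, hvs (n + 1 + (i:ℕ) + 1) (by omega) (by omega)]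
      congr 1
      apply Fin.ext
      simp only [Fin.val_succ]
      omega
    have b2 : u ((E2 i).castSucc) = s i.castSucc := by
      have hq : u ((E2 i).castSucc) = v (n + 1 + (i:ℕ)) := rfl
      rw [hq, hvs (n + 1 + (i:ℕ)) (by omega) (by omega)]
      congr 1
      apply Fin.ext
      simp only [Fin.coe_castSucc]
      omega
    rw [hg]; simp only [b1, b2]
  have hdisj : Disjoint (Finset.univ.map E1) (Finset.univ.map E2) := by
    rw [Finset.disjoint_left]
    intro x hx1 hx2
    obtain ⟨i, -, rfl⟩ := Finset.mem_map.mp hx1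
    obtain ⟨j, -, hj⟩ := Finset.mem_map.mp hx2
    have := congrArg Fin.val hj
    simp only [hE1, hE2, Function.Embedding.coeFn_mk, Fin.coe_castLE] at this
    have h5 : n + 1 + (j : ℕ) = (i : ℕ) := congrArg Fin.val hj
    omega
  calc pSum f c ⟨n, t, ht1, ht2⟩ + pSum f c ⟨p', s, hs1, hs2⟩
      = ∑ i : Fin n, g (E1 i) + ∑ i : Fin p', g (E2 i) := by
        rw [pSum, pSum]
        simp only
        rw [Finset.sum_congr rfl fun i _ => e1 i, Finset.sum_congr rfl fun i _ => e2 i]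
    _ = ∑ x ∈ Finset.univ.map E1, g x + ∑ x ∈ Finset.univ.map E2, g x := by
        rw [Finset.sum_map, Finset.sum_map]
    _ = ∑ x ∈ Finset.univ.map E1 ∪ Finset.univ.map E2, g x :=
        (Finset.sum_union hdisj).symm
    _ ≤ ∑ i : Fin (n + 1 + p'), g i :=
        Finset.sum_le_sum_of_subset (Finset.subset_univ _)

lemma TV_split (f : ℝ → ℝ) {a m b : ℝ} (c : ℝ) (ham : a ≤ m) (hmb : m ≤ b) :
    TV f a b c ≤ TV f a m c + TV f m b c + ENNReal.ofReal c := by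
  rw [TV]
  refine iSup_le fun n => iSup_le fun t => iSup_le fun hmono => iSup_le fun hmem => ?_
  set t' : Fin (n+1) → ℝ := fun j => min (t j) m with ht'
  set s' : Fin (n+1) → ℝ := fun j => max (t j) m with hs'
  have ht'mono : Monotone t' := fun i j hij => min_le_min (hmono hij) le_rfl
  have hs'mono : Monotone s' := fun i j hij => max_le_max (hmono hij) le_rfl
  have ht'mem : ∀ i, t' i ∈ Set.Icc a m :=
    fun i => ⟨le_min (hmem i).1 ham, min_le_right _ _⟩
  have hs'mem : ∀ i, s' i ∈ Set.Icc m b :=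
    fun i => ⟨le_max_right _ _, max_le (hmem i).2 hmb⟩
  set bad : Fin n → Prop := fun i => t i.castSucc < m ∧ m < t i.succ with hbad
  have hdec : DecidablePred bad := fun i => instDecidableAnd
  have key : ∀ i : Fin n, ENNReal.ofReal (|f (t i.succ) - f (t i.castSucc)| - c) ≤
      ENNReal.ofReal (|f (t' i.succ) - f (t' i.castSucc)| - c) +
      ENNReal.ofReal (|f (s' i.succ) - f (s' i.castSucc)| - c) +
      (if bad i then ENNReal.ofReal c else 0) := by
    intro i
    by_cases hb : bad i
    · rw [if_pos hb]
      obtain ⟨h1, h2⟩ : t i.castSucc < m ∧ m < t i.succ := hb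
      have e1 : t' i.castSucc = t i.castSucc := min_eq_left h1.le
      have e2 : t' i.succ = m := min_eq_right h2.le
      have e3 : s' i.castSucc = m := max_eq_right h1.le
      have e4 : s' i.succ = t i.succ := max_eq_left h2.le
      rw [e1, e2, e3, e4]
      have tri : |f (t i.succ) - f (t i.castSucc)| - c ≤
          (|f m - f (t i.castSucc)| - c) + (|f (t i.succ) - f m| - c) + c := by
        have := abs_sub_le (f (t i.succ)) (f m) (f (t i.castSucc))
        rw [abs_sub_comm (f (t i.succ)) (f m)] at this
        linarith [abs_sub_comm (f m) (f (t i.succ))]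
      calc ENNReal.ofReal (|f (t i.succ) - f (t i.castSucc)| - c)
          ≤ ENNReal.ofReal ((|f m - f (t i.castSucc)| - c) + ((|f (t i.succ) - f m| - c) + c)) :=
            ENNReal.ofReal_le_ofReal (by linarith)
        _ ≤ ENNReal.ofReal (|f m - f (t i.castSucc)| - c) +
            (ENNReal.ofReal (|f (t i.succ) - f m| - c) + ENNReal.ofReal c) := by
            refine le_trans (ENNReal.ofReal_add_le) ?_
            exact add_le_add le_rfl ENNReal.ofReal_add_le
        _ = _ := by ring
    · rw [if_neg hb, add_zero]
      simp only [hbad] at hb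
      push_neg at hb
      rcases le_or_gt m (t i.castSucc) with hm | hm
      · have e3 : s' i.castSucc = t i.castSucc := max_eq_left hm
        have e4 : s' i.succ = t i.succ := max_eq_left (hm.trans (hmono (Fin.castSucc_le_succ i)))
        rw [e3, e4]
        exact le_add_self
      · have h2 := hb hm
        have e1 : t' i.castSucc = t i.castSucc := min_eq_left hm.le
        have e2 : t' i.succ = t i.succ := min_eq_left h2
        rw [e1, e2]
        exact le_self_add
  have cardle : ∀ x ∈ Finset.univ.filter bad, ∀ y ∈ Finset.univ.filter bad, x = y := by
    intro x hx y hy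
    simp only [Finset.mem_filter, hbad] at hx hy
    by_contra hne
    rcases lt_or_gt_of_ne hne with h | h
    · have : x.succ ≤ y.castSucc := by
        rw [Fin.le_def]; simp only [Fin.val_succ, Fin.coe_castSucc]
        exact h
      exact absurd (hx.2.2.trans_le ((hmono this).trans hy.2.1.le)) (lt_irrefl m)
    · have : y.succ ≤ x.castSucc := by
        rw [Fin.le_def]; simp only [Fin.val_succ, Fin.coe_castSucc]
        exact h
      exact absurd (hy.2.2.trans_le ((hmono this).trans hx.2.1.le)) (lt_irrefl m)
  calc ∑ i : Fin n, ENNReal.ofReal (|f (t i.succ) - f (t i.castSucc)| - c)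
      ≤ ∑ i : Fin n, (ENNReal.ofReal (|f (t' i.succ) - f (t' i.castSucc)| - c) +
        ENNReal.ofReal (|f (s' i.succ) - f (s' i.castSucc)| - c) +
        (if bad i then ENNReal.ofReal c else 0)) := Finset.sum_le_sum fun i _ => key i
    _ = ∑ i : Fin n, ENNReal.ofReal (|f (t' i.succ) - f (t' i.castSucc)| - c) +
        ∑ i : Fin n, ENNReal.ofReal (|f (s' i.succ) - f (s' i.castSucc)| - c) +
        ∑ i : Fin n, (if bad i then ENNReal.ofReal c else 0) := by
        rw [Finset.sum_add_distrib, Finset.sum_add_distrib]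
    _ ≤ TV f a m c + TV f m b c + ENNReal.ofReal c := by
        refine add_le_add (add_le_add ?_ ?_) ?_
        · exact sum_le_TV f a m c n t' ht'mono ht'mem
        · exact sum_le_TV f m b c n s' hs'mono hs'mem
        · rw [← Finset.sum_filter, Finset.sum_const]
          have h1 : (Finset.univ.filter bad).card ≤ 1 := Finset.card_le_one.mpr cardle
          rcases Nat.le_one_iff_eq_zero_or_eq_one.mp h1 with h | h <;> simp [h]

lemma chain_le (f : ℝ → ℝ) (T c : ℝ) (hT : 0 < T) {n : ℕ} (hn : 0 < n) :
    ∀ (k : ℕ) (t : ℝ), (k : ℝ) * T / n ≤ t →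
    (∑ i ∈ Finset.range k, TV f (i * T / n) ((i + 1) * T / n) c)
      + TV f ((k : ℝ) * T / n) t c ≤ TV f 0 t c := by
  have hn0 : (0:ℝ) < n := by exact_mod_cast hn
  intro k
  induction k with
  | zero => intro t _; simp
  | succ k ih =>
    intro t hk1
    push_cast at hk1 ⊢
    have hstep : (k : ℝ) * T / n ≤ ((k : ℝ) + 1) * T / n :=
      (div_le_div_iff_of_pos_right hn0).mpr (by nlinarith)
    have hk0 : (k : ℝ) * T / n ≤ t := hstep.trans hk1
    have IH := ih t hk0
    calc (∑ i ∈ Finset.range (k+1), TV f (i * T / n) ((i + 1) * T / n) c)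
          + TV f (((k:ℝ) + 1) * T / n) t c
        = (∑ i ∈ Finset.range k, TV f (i * T / n) ((i + 1) * T / n) c)
          + (TV f ((k:ℝ) * T / n) (((k:ℝ) + 1) * T / n) c + TV f (((k:ℝ) + 1) * T / n) t c) := by
          rw [Finset.sum_range_succ]; push_cast; ring
      _ ≤ (∑ i ∈ Finset.range k, TV f (i * T / n) ((i + 1) * T / n) c)
          + TV f ((k:ℝ) * T / n) t c :=
          add_le_add le_rfl (TV_superadd f c hstep hk1)
      _ ≤ TV f 0 t c := IH

lemma le_chain (f : ℝ → ℝ) (T c : ℝ) (hT : 0 < T) {n : ℕ} (hn : 0 < n) :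
    ∀ (k : ℕ) (t : ℝ), (k : ℝ) * T / n ≤ t →
    TV f 0 t c ≤ (∑ i ∈ Finset.range k, TV f (i * T / n) ((i + 1) * T / n) c)
      + TV f ((k : ℝ) * T / n) t c + (k : ℝ≥0∞) * ENNReal.ofReal c := by
  have hn0 : (0:ℝ) < n := by exact_mod_cast hn
  intro k
  induction k with
  | zero => intro t _; simp
  | succ k ih =>
    intro t hk1
    push_cast at hk1 ⊢
    have hstep : (k : ℝ) * T / n ≤ ((k : ℝ) + 1) * T / n :=
      (div_le_div_iff_of_pos_right hn0).mpr (by nlinarith)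
    have hk0 : (k : ℝ) * T / n ≤ t := hstep.trans hk1
    have IH := ih t hk0
    calc TV f 0 t c
        ≤ (∑ i ∈ Finset.range k, TV f (i * T / n) ((i + 1) * T / n) c)
          + TV f ((k:ℝ) * T / n) t c + (k : ℝ≥0∞) * ENNReal.ofReal c := IH
      _ ≤ (∑ i ∈ Finset.range k, TV f (i * T / n) ((i + 1) * T / n) c)
          + (TV f ((k:ℝ) * T / n) (((k:ℝ)+1) * T / n) c + TV f (((k:ℝ)+1) * T / n) t c
            + ENNReal.ofReal c) + (k : ℝ≥0∞) * ENNReal.ofReal c := by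
          gcongr
          exact TV_split f c hstep hk1
      _ = (∑ i ∈ Finset.range (k+1), TV f (i * T / n) ((i + 1) * T / n) c)
          + TV f (((k:ℝ)+1) * T / n) t c + ((k : ℝ≥0∞) + 1) * ENNReal.ofReal c := by
          rw [Finset.sum_range_succ]; push_cast; ring

lemma main_est (f : ℝ → ℝ) (T c : ℝ) (hT : 0 < T) {n : ℕ} (hn : 0 < n)
    {t : ℝ} (ht : t ∈ Set.Icc (0:ℝ) T) :
    ATV f T n c t ≤ TV f 0 t c ∧
      TV f 0 t c ≤ ATV f T n c t + (n : ℝ≥0∞) * ENNReal.ofReal c := by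
  obtain ⟨ht0, htT⟩ := ht
  have hn0 : (0:ℝ) < n := by exact_mod_cast hn
  set k := Nat.floor ((n : ℝ) * t / T) with hk
  have hfloor : (k : ℝ) ≤ (n : ℝ) * t / T := Nat.floor_le (by positivity)
  have hkt : (k : ℝ) * T / n ≤ t := by
    rw [div_le_iff₀ hn0]
    rw [le_div_iff₀ hT] at hfloor
    nlinarith
  have hkn : k ≤ n := by
    have h1 : (n : ℝ) * t / T ≤ (n : ℝ) := by
      rw [div_le_iff₀ hT]; nlinarith
    calc k ≤ Nat.floor ((n:ℝ)) := Nat.floor_le_floor h1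
      _ = n := Nat.floor_natCast n
  constructor
  · exact chain_le f T c hT hn k t hkt
  · refine (le_chain f T c hT hn k t hkt).trans ?_
    rw [ATV]
    gcongr

/-- For càdlàg `f` on `[0,T]`, `c > 0` and `n ≥ 1`: for every `t ∈ [0,T]`,
`ATV^{n,c}(t) ≤ TV^c(f,[0,t]) ≤ ATV^{n,c}(t) + nc`; in particular, for fixed `n`,
`sup_{t ∈ [0,T]} |TV^c(f,[0,t]) − ATV^{n,c}(t)| → 0` as `c ↘ 0`. -/
theorem approximated_truncated_variation_estimate
    (T c : ℝ) (hT : 0 < T) (hc : 0 < c) (n : ℕ) (hn : 0 < n)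
    (f : ℝ → ℝ) (hf : Cadlag f 0 T) :
    (∀ t ∈ Set.Icc (0:ℝ) T,
      ATV f T n c t ≤ TV f 0 t c ∧
      TV f 0 t c ≤ ATV f T n c t + (n : ℝ≥0∞) * ENNReal.ofReal c) ∧
    Tendsto
      (fun c' : ℝ => ⨆ t : Set.Icc (0:ℝ) T, |(TV f 0 t c').toReal - (ATV f T n c' t).toReal|)
      (𝓝[>] (0 : ℝ)) (𝓝 0) := by
  constructor
  · exact fun t ht => main_est f T c hT hn ht
  · have key : ∀ c' : ℝ, 0 < c' → ∀ t : Set.Icc (0:ℝ) T,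
        |(TV f 0 t c').toReal - (ATV f T n c' t).toReal| ≤ (n:ℝ) * c' := by
      intro c' hc' t
      obtain ⟨h1, h2⟩ := main_est f T c' hT hn t.2
      by_cases hA : ATV f T n c' t = ⊤
      · have hTV : TV f 0 t c' = ⊤ := top_le_iff.mp (hA ▸ h1)
        rw [hA, hTV]
        simp only [ENNReal.toReal_top, sub_self, abs_zero]
        positivity
      · have hfin : (n : ℝ≥0∞) * ENNReal.ofReal c' ≠ ⊤ :=
          ENNReal.mul_ne_top (ENNReal.natCast_ne_top n) ENNReal.ofReal_ne_top
        have hsum : ATV f T n c' t + (n : ℝ≥0∞) * ENNReal.ofReal c' ≠ ⊤ :=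
          ENNReal.add_ne_top.mpr ⟨hA, hfin⟩
        have hTVfin : TV f 0 t c' ≠ ⊤ := by
          intro h
          rw [h] at h2
          exact hsum (top_le_iff.mp h2)
        have hle1 : (ATV f T n c' t).toReal ≤ (TV f 0 t c').toReal :=
          ENNReal.toReal_mono hTVfin h1
        have hle2 : (TV f 0 t c').toReal ≤ (ATV f T n c' t).toReal + n * c' := by
          have h3 := ENNReal.toReal_mono hsum h2
          rwa [ENNReal.toReal_add hA hfin, ENNReal.toReal_mul, ENNReal.toReal_natCast,
            ENNReal.toReal_ofReal hc'.le] at h3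
        rw [abs_of_nonneg (by linarith)]
        linarith
    refine squeeze_zero' (g := fun c' : ℝ => (n:ℝ) * c') ?_ ?_ ?_
    · filter_upwards [self_mem_nhdsWithin] with c' hc'
      exact Real.iSup_nonneg fun t => abs_nonneg _
    · filter_upwards [self_mem_nhdsWithin] with c' hc'
      exact Real.iSup_le (fun t => key c' hc' t) (mul_nonneg (Nat.cast_nonneg n) (le_of_lt hc'))
    · have h4 : Tendsto (fun c' : ℝ => (n:ℝ) * c') (𝓝 0) (𝓝 ((n:ℝ) * 0)) :=
        (continuous_const.mul continuous_id).tendsto 0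
      simpa using h4.mono_left nhdsWithin_le_nhds
end
end
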